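/- Let 1 ≤ p < ∞ and let X₁, …, Xₙ, Y be real Banach spaces. Every continuous n-linear operator T : X₁ × ⋯ × Xₙ → Y whose range is contained in a finite-dimensional linear subspace of Y is Lipschitz p-summing. -/

import Mathlib

open scoped BigOperators

/-- `T` is Lipschitz `p`-summing with constant `c`. -/
def LipschitzPSumming {n : ℕ} {X : Fin n → Type*} [∀ i, NormedAddCommGroup (X i)]
    [∀ i, NormedSpace ℝ (X i)] {Y : Type*} [NormedAddCommGroup Y] [NormedSpace ℝ Y]
    (p c : ℝ) (T : ContinuousMultilinearMap ℝ X Y) : Prop :=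
  ∀ (k : ℕ) (u v : Fin k → ((i : Fin n) → X i)),
    (∑ i, ‖T (u i) - T (v i)‖ ^ p) ^ (1 / p) ≤
      c * ⨆ φ : {φ : ContinuousMultilinearMap ℝ X ℝ // ‖φ‖ ≤ 1},
        (∑ i, |φ.1 (u i) - φ.1 (v i)| ^ p) ^ (1 / p)

/-- Finite Minkowski inequality: `L_p` seminorm of a finite sum of nonnegative functions. -/
lemma Lp_sum_le_aux {ι J : Type*} (t : Finset ι) (s : Finset J) {p : ℝ} (hp : 1 ≤ p)
    (f : J → ι → ℝ) (hf : ∀ j i, 0 ≤ f j i) :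
    (∑ i ∈ t, (∑ j ∈ s, f j i) ^ p) ^ (1 / p) ≤
      ∑ j ∈ s, (∑ i ∈ t, f j i ^ p) ^ (1 / p) := by
  classical
  have hp0 : p ≠ 0 := by positivity
  induction s using Finset.induction with
  | empty =>
      simp [Real.zero_rpow hp0, Real.zero_rpow (inv_ne_zero hp0)]
  | @insert a s ha ih =>
      simp only [Finset.sum_insert ha]
      calc (∑ i ∈ t, (f a i + ∑ j ∈ s, f j i) ^ p) ^ (1 / p)
          ≤ (∑ i ∈ t, (f a i) ^ p) ^ (1 / p) + (∑ i ∈ t, (∑ j ∈ s, f j i) ^ p) ^ (1 / p) :=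
            Real.Lp_add_le_of_nonneg t hp (fun i _ => hf a i)
              (fun i _ => Finset.sum_nonneg fun j _ => hf j i)
        _ ≤ (∑ i ∈ t, (f a i) ^ p) ^ (1 / p) + ∑ j ∈ s, (∑ i ∈ t, f j i ^ p) ^ (1 / p) := by
            gcongr

/-- Factoring out a nonnegative constant from an `L_p` seminorm. -/
lemma Lp_smul_aux {ι : Type*} (t : Finset ι) {p c : ℝ} (hp : 1 ≤ p) (hc : 0 ≤ c)
    (a : ι → ℝ) (ha : ∀ i, 0 ≤ a i) :
    (∑ i ∈ t, (c * a i) ^ p) ^ (1 / p) = c * (∑ i ∈ t, a i ^ p) ^ (1 / p) := by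
  have hp0 : p ≠ 0 := by positivity
  have h1 : ∀ i ∈ t, (c * a i) ^ p = c ^ p * a i ^ p := fun i _ => Real.mul_rpow hc (ha i)
  rw [Finset.sum_congr rfl h1, ← Finset.mul_sum,
    Real.mul_rpow (Real.rpow_nonneg hc p)
      (Finset.sum_nonneg fun i _ => Real.rpow_nonneg (ha i) p),
    ← Real.rpow_mul hc p (1 / p), mul_one_div_cancel hp0, Real.rpow_one]

/-- Every continuous multilinear operator whose range lies in a finite-dimensional
subspace of `Y` is Lipschitz `p`-summing. -/
theorem lipschitzPSumming_of_finiteDimensional_range {n : ℕ} {X : Fin n → Type*}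
    [∀ i, NormedAddCommGroup (X i)] [∀ i, NormedSpace ℝ (X i)] [∀ i, CompleteSpace (X i)]
    {Y : Type*} [NormedAddCommGroup Y] [NormedSpace ℝ Y] [CompleteSpace Y]
    (p : ℝ) (hp : 1 ≤ p) (T : ContinuousMultilinearMap ℝ X Y)
    (F : Submodule ℝ Y) (hF : FiniteDimensional ℝ F)
    (hrange : ∀ x : (i : Fin n) → X i, T x ∈ F) :
    ∃ c : ℝ, 0 ≤ c ∧ LipschitzPSumming p c T := by
  classical
  have hp0 : p ≠ 0 := by positivity
  set m := Module.finrank ℝ F with hm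
  let b : Module.Basis (Fin m) ℝ F := Module.finBasis ℝ F
  let T' : ContinuousMultilinearMap ℝ X F := T.codRestrict F hrange
  let f : Fin m → (F →L[ℝ] ℝ) := fun j => LinearMap.toContinuousLinearMap (b.coord j)
  let ψ : Fin m → ContinuousMultilinearMap ℝ X ℝ :=
    fun j => (f j).compContinuousMultilinearMap T'
  refine ⟨∑ j, ‖(b j : Y)‖ * max ‖ψ j‖ 1, Finset.sum_nonneg fun j _ => by positivity, ?_⟩
  intro k u v
  set S := ⨆ φ : {φ : ContinuousMultilinearMap ℝ X ℝ // ‖φ‖ ≤ 1},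
        (∑ i, |φ.1 (u i) - φ.1 (v i)| ^ p) ^ (1 / p) with hSdef
  -- the supremum is over a set bounded above
  have hbdd : BddAbove (Set.range fun φ : {φ : ContinuousMultilinearMap ℝ X ℝ // ‖φ‖ ≤ 1} =>
      (∑ i, |φ.1 (u i) - φ.1 (v i)| ^ p) ^ (1 / p)) := by
    refine ⟨(∑ i, ((∏ l, ‖u i l‖) + ∏ l, ‖v i l‖) ^ p) ^ (1 / p), ?_⟩
    rintro _ ⟨φ, rfl⟩
    apply Real.rpow_le_rpow (Finset.sum_nonneg fun i _ => Real.rpow_nonneg (abs_nonneg _) p)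
      ?_ (by positivity)
    apply Finset.sum_le_sum
    intro i _
    apply Real.rpow_le_rpow (abs_nonneg _) ?_ (by linarith)
    have hb : ∀ x : (l : Fin n) → X l, |φ.1 x| ≤ ∏ l, ‖x l‖ := by
      intro x
      rw [← Real.norm_eq_abs]
      calc ‖φ.1 x‖ ≤ ‖φ.1‖ * ∏ l, ‖x l‖ := φ.1.le_opNorm x
        _ ≤ 1 * ∏ l, ‖x l‖ := by
            apply mul_le_mul_of_nonneg_right φ.2
            positivity
        _ = ∏ l, ‖x l‖ := one_mul _
    calc |φ.1 (u i) - φ.1 (v i)| ≤ |φ.1 (u i)| + |φ.1 (v i)| := abs_sub _ _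
      _ ≤ (∏ l, ‖u i l‖) + ∏ l, ‖v i l‖ := add_le_add (hb (u i)) (hb (v i))
  have hS0 : 0 ≤ S := Real.iSup_nonneg fun φ =>
    Real.rpow_nonneg (Finset.sum_nonneg fun i _ => Real.rpow_nonneg (abs_nonneg _) p) _
  -- pointwise bound
  have key : ∀ x y : (i : Fin n) → X i,
      ‖T x - T y‖ ≤ ∑ j, ‖(b j : Y)‖ * |ψ j x - ψ j y| := by
    intro x y
    have hxy : T x - T y = ((T' x - T' y : F) : Y) := rfl
    have hrepr : (T' x - T' y : F) = ∑ j, (ψ j x - ψ j y) • b j := by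
      conv_lhs => rw [← b.sum_repr (T' x - T' y)]
      refine Finset.sum_congr rfl fun j _ => ?_
      congr 1
      have : b.repr (T' x - T' y) j = b.coord j (T' x - T' y) := rfl
      rw [this, map_sub]
      rfl
    rw [hxy, hrepr]
    calc ‖((∑ j, (ψ j x - ψ j y) • b j : F) : Y)‖
        = ‖∑ j, (ψ j x - ψ j y) • (b j : Y)‖ := by push_cast; rfl
      _ ≤ ∑ j, ‖(ψ j x - ψ j y) • (b j : Y)‖ := norm_sum_le _ _
      _ = ∑ j, ‖(b j : Y)‖ * |ψ j x - ψ j y| := by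
          refine Finset.sum_congr rfl fun j _ => ?_
          rw [norm_smul, Real.norm_eq_abs, mul_comm]
  -- for each j, the normalized functional lies in the unit ball
  have hj : ∀ j, (∑ i, |ψ j (u i) - ψ j (v i)| ^ p) ^ (1 / p) ≤ max ‖ψ j‖ 1 * S := by
    intro j
    set M : ℝ := max ‖ψ j‖ 1 with hM
    have hM1 : 0 < M := lt_of_lt_of_le one_pos (le_max_right _ _)
    set φ : ContinuousMultilinearMap ℝ X ℝ := M⁻¹ • ψ j with hφ
    have hφnorm : ‖φ‖ ≤ 1 := by
      refine le_trans ((ψ j).opNorm_smul_le M⁻¹) ?_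
      rw [norm_inv, Real.norm_eq_abs, abs_of_pos hM1, inv_mul_le_iff₀ hM1, mul_one]
      exact le_max_left _ _
    have hφval : ∀ x, φ x = M⁻¹ * ψ j x := fun x => rfl
    have : (∑ i, |φ (u i) - φ (v i)| ^ p) ^ (1 / p) ≤ S :=
      le_ciSup hbdd (⟨φ, hφnorm⟩ : {φ : ContinuousMultilinearMap ℝ X ℝ // ‖φ‖ ≤ 1})
    have heq : (∑ i, |φ (u i) - φ (v i)| ^ p) ^ (1 / p)
        = M⁻¹ * (∑ i, |ψ j (u i) - ψ j (v i)| ^ p) ^ (1 / p) := by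
      rw [← Lp_smul_aux Finset.univ hp (inv_nonneg.2 hM1.le) _ fun i => abs_nonneg _]
      refine congrArg (· ^ (1 / p)) (Finset.sum_congr rfl fun i _ => ?_)
      rw [hφval, hφval, ← mul_sub, abs_mul, abs_of_pos (inv_pos.2 hM1)]
    rw [heq] at this
    calc (∑ i, |ψ j (u i) - ψ j (v i)| ^ p) ^ (1 / p)
        = M * (M⁻¹ * (∑ i, |ψ j (u i) - ψ j (v i)| ^ p) ^ (1 / p)) := by
          rw [← mul_assoc, mul_inv_cancel₀ hM1.ne', one_mul]
      _ ≤ M * S := by gcongr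
  -- main chain
  calc (∑ i, ‖T (u i) - T (v i)‖ ^ p) ^ (1 / p)
      ≤ (∑ i, (∑ j, ‖(b j : Y)‖ * |ψ j (u i) - ψ j (v i)|) ^ p) ^ (1 / p) := by
        apply Real.rpow_le_rpow (Finset.sum_nonneg fun i _ =>
          Real.rpow_nonneg (norm_nonneg _) p) ?_ (by positivity)
        apply Finset.sum_le_sum
        intro i _
        exact Real.rpow_le_rpow (norm_nonneg _) (key (u i) (v i)) (by linarith)
    _ ≤ ∑ j, (∑ i, (‖(b j : Y)‖ * |ψ j (u i) - ψ j (v i)|) ^ p) ^ (1 / p) :=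
        Lp_sum_le_aux _ _ hp _ fun j i => by positivity
    _ = ∑ j, ‖(b j : Y)‖ * (∑ i, |ψ j (u i) - ψ j (v i)| ^ p) ^ (1 / p) :=
        Finset.sum_congr rfl fun j _ =>
          Lp_smul_aux _ hp (norm_nonneg _) _ fun i => abs_nonneg _
    _ ≤ ∑ j, ‖(b j : Y)‖ * (max ‖ψ j‖ 1 * S) :=
        Finset.sum_le_sum fun j _ => mul_le_mul_of_nonneg_left (hj j) (norm_nonneg _)
    _ = (∑ j, ‖(b j : Y)‖ * max ‖ψ j‖ 1) * S := by
        rw [Finset.sum_mul]; exact Finset.sum_congr rfl fun j _ => (mul_assoc _ _ _).symm
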